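/- Let d ≥ 1, let T₁, …, T_d > 0, let β : ℝ^d → ℝ be C³ and periodic with periods Tᵢ (β(x + Tᵢeᵢ) = β(x) for all x ∈ ℝ^d and i = 1, …, d), and let g : ℝ → ℝ be differentiable with g′(y) ≤ 0 for every y ∈ ℝ. If −Δβ(x) = g(β(x)) for every x ∈ ℝ^d, then β is constant. -/

import Mathlib

open MeasureTheory Real Filter Set Topology

/-- The Laplacian of `β : ℝ^d → ℝ`, as the sum of second partial derivatives. -/
noncomputable def lap {d : ℕ} (β : EuclideanSpace ℝ (Fin d) → ℝ)
    (x : EuclideanSpace ℝ (Fin d)) : ℝ :=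
  ∑ i : Fin d, iteratedFDeriv ℝ 2 β x ![EuclideanSpace.single i 1, EuclideanSpace.single i 1]

section Aux

variable {d : ℕ} {α : Type}

private lemma per_int (h : EuclideanSpace ℝ (Fin d) → α) (c : EuclideanSpace ℝ (Fin d))
    (hp : ∀ x, h (x + c) = h x) (n : ℤ) (x : EuclideanSpace ℝ (Fin d)) :
    h (x + (n : ℝ) • c) = h x := by
  have hp' : ∀ y, h (y - c) = h y := fun y => by
    rw [← hp (y - c), sub_add_cancel]
  induction n using Int.induction_on with
  | zero => simp
  | succ n ih =>
      have e : x + (((n : ℤ) + 1 : ℤ) : ℝ) • c = (x + ((n : ℤ) : ℝ) • c) + c := by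
        push_cast; rw [add_smul, one_smul, add_assoc]
      rw [e, hp, ih]
  | pred n ih =>
      have e : x + ((-(n : ℤ) - 1 : ℤ) : ℝ) • c = (x + ((-(n : ℤ)) : ℝ) • c) - c := by
        push_cast; rw [sub_smul, one_smul, add_sub_assoc]
      rw [e, hp']
      exact_mod_cast ih

private lemma per_sum (T : Fin d → ℝ) (h : EuclideanSpace ℝ (Fin d) → α)
    (hp : ∀ x i, h (x + T i • EuclideanSpace.single i (1:ℝ)) = h x)
    (m : Fin d → ℤ) (x : EuclideanSpace ℝ (Fin d)) :
    h (x + ∑ i, ((m i : ℝ) * T i) • EuclideanSpace.single i (1:ℝ)) = h x := by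
  classical
  have key : ∀ s : Finset (Fin d), ∀ x,
      h (x + ∑ i ∈ s, ((m i : ℝ) * T i) • EuclideanSpace.single i (1:ℝ)) = h x := by
    intro s
    induction s using Finset.induction_on with
    | empty => intro x; simp
    | insert a s' ha ih =>
        intro x
        rw [Finset.sum_insert ha]
        have e : x + (((m a : ℝ) * T a) • EuclideanSpace.single a (1:ℝ) +
            ∑ i ∈ s', ((m i : ℝ) * T i) • EuclideanSpace.single i (1:ℝ))
            = (x + ∑ i ∈ s', ((m i : ℝ) * T i) • EuclideanSpace.single i (1:ℝ))
              + (m a : ℝ) • (T a • EuclideanSpace.single a (1:ℝ)) := by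
          rw [smul_smul]; ring_nf
          rw [add_comm ((((m a : ℝ)) * T a) • _) _, add_assoc]
        rw [e, per_int _ _ (fun y => hp y a), ih]
  exact key Finset.univ x

private lemma reduce (T : Fin d → ℝ) (hT : ∀ i, 0 < T i) (x : EuclideanSpace ℝ (Fin d)) :
    ∃ w : Fin d → ℝ, w ∈ Set.Icc 0 T ∧
      ∀ (α : Type) (h : EuclideanSpace ℝ (Fin d) → α),
        (∀ y i, h (y + T i • EuclideanSpace.single i (1:ℝ)) = h y) →
        h ((EuclideanSpace.equiv (Fin d) ℝ).symm w) = h x := by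
  classical
  set w : Fin d → ℝ := fun i => T i * Int.fract (x i / T i) with hw
  refine ⟨w, ?_, ?_⟩
  · constructor
    · intro i
      exact mul_nonneg (hT i).le (Int.fract_nonneg _)
    · intro i
      calc T i * Int.fract (x i / T i) ≤ T i * 1 :=
            mul_le_mul_of_nonneg_left (Int.fract_lt_one _).le (hT i).le
        _ = T i := mul_one _
  · intro α h hp
    set m : Fin d → ℤ := fun i => ⌊x i / T i⌋ with hm
    have hx : x = (EuclideanSpace.equiv (Fin d) ℝ).symm w +
        ∑ i, ((m i : ℝ) * T i) • EuclideanSpace.single i (1:ℝ) := by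
      ext j
      have hsum : (∑ i, ((m i : ℝ) * T i) • EuclideanSpace.single i (1:ℝ)) j
          = ∑ i, (((m i : ℝ) * T i) • EuclideanSpace.single i (1:ℝ)) j := by
        rw [WithLp.ofLp_sum]; exact Finset.sum_apply j Finset.univ _
      have h0 : ((EuclideanSpace.equiv (Fin d) ℝ).symm w +
          ∑ i, ((m i : ℝ) * T i) • EuclideanSpace.single i (1:ℝ)) j
          = w j + (∑ i, ((m i : ℝ) * T i) • EuclideanSpace.single i (1:ℝ)) j := rfl
      rw [h0, hsum]
      have hs : ∀ i, (((m i : ℝ) * T i) • EuclideanSpace.single i (1:ℝ)) j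
          = ((m i : ℝ) * T i) * (if i = j then 1 else 0) := by
        intro i
        simp [EuclideanSpace.single_apply, eq_comm]
      simp only [hs, mul_ite, mul_one, mul_zero, Finset.sum_ite_eq, Finset.sum_ite_eq', Finset.mem_univ, if_true]
      have hTj := (hT j).ne'
      rw [hw, hm]
      simp only [Int.fract]
      field_simp
      ring
    rw [hx, per_sum T h hp m]

private lemma sdt (φ : ℝ → ℝ) (h1 : Differentiable ℝ φ) (h2 : Differentiable ℝ (deriv φ))
    (hmax : ∀ t, φ t ≤ φ 0) : deriv (deriv φ) 0 ≤ 0 := by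
  by_contra hc
  push_neg at hc
  set c := deriv (deriv φ) 0 with hcdef
  have hφ'0 : deriv φ 0 = 0 := by
    have : IsLocalMax φ 0 := IsMaxOn.isLocalMax (fun t _ => hmax t) univ_mem
    exact this.deriv_eq_zero
  have hslope : Tendsto (slope (deriv φ) 0) (𝓝[≠] (0:ℝ)) (𝓝 c) :=
    hasDerivAt_iff_tendsto_slope.1 (h2 0).hasDerivAt
  have hev : ∀ᶠ t in 𝓝[>] (0:ℝ), c/2 < slope (deriv φ) 0 t := by
    have h₁ : ∀ᶠ y in 𝓝 c, c/2 < y := eventually_gt_nhds (by linarith)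
    exact (hslope.eventually h₁).filter_mono
      (nhdsWithin_mono 0 (fun t ht => ne_of_gt ht))
  have hpos : ∀ᶠ t in 𝓝[>] (0:ℝ), 0 < deriv φ t := by
    filter_upwards [hev, self_mem_nhdsWithin] with t ht ht0
    have hslope_eq : slope (deriv φ) 0 t = deriv φ t / t := by
      rw [slope_def_field, hφ'0]; ring_nf
    rw [hslope_eq] at ht
    have := lt_trans (by linarith : (0:ℝ) < c/2) ht
    exact (div_pos_iff.mp this).resolve_right (fun ⟨_, h⟩ => absurd ht0 (not_lt.2 h.le)) |>.1
  rw [eventually_nhdsWithin_iff] at hpos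
  rcases Metric.eventually_nhds_iff.mp hpos with ⟨δ, hδ, hball⟩
  have hmono : StrictMonoOn φ (Icc 0 (δ/2)) := by
    apply strictMonoOn_of_deriv_pos (convex_Icc _ _) h1.continuous.continuousOn
    intro t ht
    rw [interior_Icc] at ht
    have : dist t 0 < δ := by
      rw [Real.dist_eq, sub_zero, abs_of_pos ht.1]
      linarith [ht.2]
    exact hball this ht.1
  have h02 : (0:ℝ) ∈ Icc (0:ℝ) (δ/2) := by constructor <;> [rfl; positivity]
  have hδ2 : (δ/2 : ℝ) ∈ Icc (0:ℝ) (δ/2) := by constructor <;> [positivity; rfl]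
  have := hmono h02 hδ2 (by positivity)
  linarith [hmax (δ/2)]

private lemma dir2_nonpos (β : EuclideanSpace ℝ (Fin d) → ℝ) (hβ : ContDiff ℝ 3 β)
    (x₀ v : EuclideanSpace ℝ (Fin d)) (hmax : ∀ x, β x ≤ β x₀) :
    fderiv ℝ (fderiv ℝ β) x₀ v v ≤ 0 := by
  have hβd : Differentiable ℝ β := hβ.differentiable (by norm_num)
  have hD2 : ContDiff ℝ 2 (fderiv ℝ β) := hβ.fderiv_right (by norm_num)
  have hDd : Differentiable ℝ (fderiv ℝ β) := hD2.differentiable (by norm_num)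
  have hg1' : ∀ x, HasFDerivAt (fun y => fderiv ℝ β y v)
      ((fderiv ℝ (fderiv ℝ β) x).flip v) x := by
    intro x
    have := (hDd x).hasFDerivAt.clm_apply (hasFDerivAt_const v x)
    simpa using this
  set φ : ℝ → ℝ := fun t => β (x₀ + t • v) with hφ
  have hline : ∀ t : ℝ, HasDerivAt (fun t : ℝ => x₀ + t • v) v t := by
    intro t
    simpa using ((hasDerivAt_id t).smul_const v).const_add x₀
  have hφd : ∀ t, HasDerivAt φ (fderiv ℝ β (x₀ + t • v) v) t := fun t =>
    (hβd _).hasFDerivAt.comp_hasDerivAt t (hline t)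
  have hderivφ : deriv φ = fun t => fderiv ℝ β (x₀ + t • v) v :=
    funext fun t => (hφd t).deriv
  have hφ'd : ∀ t, HasDerivAt (fun t : ℝ => fderiv ℝ β (x₀ + t • v) v)
      (((fderiv ℝ (fderiv ℝ β) (x₀ + t • v)).flip v) v) t := fun t =>
    (hg1' _).comp_hasDerivAt t (hline t)
  have h2 : deriv (deriv φ) 0 = fderiv ℝ (fderiv ℝ β) x₀ v v := by
    rw [hderivφ]
    have := (hφ'd 0).deriv
    simpa using this
  rw [← h2]
  exact sdt φ (fun t => (hφd t).differentiableAt)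
    (by rw [hderivφ]; exact fun t => (hφ'd t).differentiableAt)
    (fun t => by simpa [hφ] using hmax (x₀ + t • v))

private lemma eucl_sum (x : EuclideanSpace ℝ (Fin d)) :
    x = ∑ i, x i • EuclideanSpace.single i (1:ℝ) := by
  ext j
  have : (∑ i, x i • EuclideanSpace.single i (1:ℝ)) j
      = ∑ i, (x i • EuclideanSpace.single i (1:ℝ)) j := by
    rw [WithLp.ofLp_sum]; exact Finset.sum_apply j Finset.univ _
  rw [this]
  simp [EuclideanSpace.single_apply]

end Aux

set_option maxHeartbeats 1000000 in
/-- Elliptic rigidity lemma: if `β : ℝ^d → ℝ` is `C³` and periodic with periods `Tᵢ > 0`,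
`g : ℝ → ℝ` is differentiable with `g′ ≤ 0` everywhere, and `−Δβ = g(β)` everywhere, then
`β` is constant. -/
theorem stmt_3 (d : ℕ) (hd : 1 ≤ d) (T : Fin d → ℝ) (hT : ∀ i, 0 < T i)
    (β : EuclideanSpace ℝ (Fin d) → ℝ) (hβ : ContDiff ℝ 3 β)
    (hper : ∀ (x : EuclideanSpace ℝ (Fin d)) (i : Fin d),
      β (x + T i • EuclideanSpace.single i (1 : ℝ)) = β x)
    (g : ℝ → ℝ) (hg : Differentiable ℝ g) (hg' : ∀ y, deriv g y ≤ 0)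
    (heq : ∀ x, -lap β x = g (β x)) :
    ∀ x y, β x = β y := by
  classical
  have hβd : Differentiable ℝ β := hβ.differentiable (by norm_num)
  have hβc : Continuous β := hβ.continuous
  have hD2 : ContDiff ℝ 2 (fderiv ℝ β) := hβ.fderiv_right (by norm_num)
  have hDd : Differentiable ℝ (fderiv ℝ β) := hD2.differentiable (by norm_num)
  have hDc : Continuous (fderiv ℝ β) := hD2.continuous
  have hHc : Continuous (fderiv ℝ (fderiv ℝ β)) :=
    (hD2.fderiv_right (m := 1) (by norm_num)).continuous
  -- the continuous linear equivalence between the pi space and Euclidean space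
  set es := (EuclideanSpace.equiv (Fin d) ℝ).symm with hes
  have hesc : Continuous es := es.continuous
  -- pointwise second-derivative description of the Laplacian
  have hlapH : ∀ x, lap β x =
      ∑ i, fderiv ℝ (fderiv ℝ β) x (EuclideanSpace.single i 1) (EuclideanSpace.single i 1) := by
    intro x
    unfold lap
    refine Finset.sum_congr rfl fun i _ => ?_
    rw [iteratedFDeriv_two_apply]
    simp
  -- periodicity of the derivative
  have hDper : ∀ (x : EuclideanSpace ℝ (Fin d)) (i : Fin d),
      fderiv ℝ β (x + T i • EuclideanSpace.single i 1) = fderiv ℝ β x := by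
    intro x i
    set c := T i • EuclideanSpace.single i (1:ℝ) with hc
    have hfun : (fun y => β (y + c)) = β := funext fun y => hper y i
    have hhd : HasFDerivAt (fun y => β (y + c)) (fderiv ℝ β (x + c)) x := by
      have h1 := (hβd (x + c)).hasFDerivAt
      have h2 : HasFDerivAt (fun y : EuclideanSpace ℝ (Fin d) => y + c)
          (ContinuousLinearMap.id ℝ _) x := (hasFDerivAt_id x).add_const c
      have h3 := h1.comp x h2
      rw [ContinuousLinearMap.comp_id] at h3
      exact h3
    calc fderiv ℝ β (x + c) = fderiv ℝ (fun y => β (y + c)) x := hhd.fderiv.symm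
      _ = fderiv ℝ β x := by rw [hfun]
  -- step 1 : the nonlinearity vanishes along β, so β is harmonic
  have hzero : (0 : Fin d → ℝ) ∈ Set.Icc (0 : Fin d → ℝ) T :=
    ⟨le_rfl, fun i => (hT i).le⟩
  obtain ⟨w₀, hw₀, hw₀max⟩ := (isCompact_Icc (a := (0 : Fin d → ℝ)) (b := T)).exists_isMaxOn
    ⟨0, hzero⟩ ((hβc.comp hesc).continuousOn)
  obtain ⟨w₁, hw₁, hw₁min⟩ := (isCompact_Icc (a := (0 : Fin d → ℝ)) (b := T)).exists_isMinOn
    ⟨0, hzero⟩ ((hβc.comp hesc).continuousOn)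
  have hmax : ∀ x, β x ≤ β (es w₀) := by
    intro x
    obtain ⟨w, hw, hred⟩ := reduce T hT x
    rw [← hred ℝ β hper]
    exact hw₀max hw
  have hmin : ∀ x, β (es w₁) ≤ β x := by
    intro x
    obtain ⟨w, hw, hred⟩ := reduce T hT x
    rw [← hred ℝ β hper]
    exact hw₁min hw
  have hlapmax : lap β (es w₀) ≤ 0 := by
    rw [hlapH]
    refine Finset.sum_nonpos fun i _ => ?_
    exact dir2_nonpos β hβ (es w₀) _ hmax
  have hlapmin : 0 ≤ lap β (es w₁) := by
    rw [hlapH]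
    refine Finset.sum_nonneg fun i _ => ?_
    have hneg := dir2_nonpos (fun x => -β x) hβ.neg (es w₁) (EuclideanSpace.single i 1)
      (fun x => neg_le_neg (hmin x))
    have e1 : (fderiv ℝ (fun x => -β x)) = fun x => -(fderiv ℝ β x) :=
      funext fun x => fderiv_neg
    rw [e1] at hneg
    have e2 : fderiv ℝ (fun x => -(fderiv ℝ β x)) (es w₁) =
        -(fderiv ℝ (fderiv ℝ β) (es w₁)) := fderiv_neg
    rw [e2] at hneg
    simpa using hneg
  have hganti : Antitone g := antitone_of_deriv_nonpos hg hg'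
  have hgzero : ∀ x, g (β x) = 0 := by
    intro x
    have h1 : 0 ≤ g (β (es w₀)) := by
      have := heq (es w₀)
      linarith
    have h2 : g (β (es w₁)) ≤ 0 := by
      have := heq (es w₁)
      linarith
    have h3 : g (β (es w₀)) ≤ g (β x) := hganti (hmax x)
    have h4 : g (β x) ≤ g (β (es w₁)) := hganti (hmin x)
    linarith
  have hlap0 : ∀ x, (∑ i, fderiv ℝ (fderiv ℝ β) x (EuclideanSpace.single i 1)
      (EuclideanSpace.single i 1)) = 0 := by
    intro x
    rw [← hlapH]
    have := heq x
    rw [hgzero x] at this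
    linarith
  -- step 2 : integration by parts over a period cell
  obtain ⟨n, rfl⟩ : ∃ n, d = n + 1 := ⟨d - 1, by omega⟩
  set G : (Fin (n+1) → ℝ) → ℝ :=
    fun w => ∑ i, (fderiv ℝ β (es w) (EuclideanSpace.single i 1))^2 with hG
  have hGc : Continuous G := by
    refine continuous_finset_sum _ fun i _ => ?_
    exact ((ContinuousLinearMap.apply ℝ ℝ (EuclideanSpace.single i 1)).continuous.comp
      (hDc.comp hesc)).pow 2
  have hGnonneg : ∀ w, 0 ≤ G w := fun w => Finset.sum_nonneg fun i _ => sq_nonneg _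
  -- the vector field and its derivative
  set F : Fin (n+1) → (Fin (n+1) → ℝ) → ℝ :=
    fun i w => β (es w) * fderiv ℝ β (es w) (EuclideanSpace.single i 1) with hF
  set F' : Fin (n+1) → (Fin (n+1) → ℝ) → (Fin (n+1) → ℝ) →L[ℝ] ℝ := fun i w =>
    ((β (es w) • ((fderiv ℝ (fderiv ℝ β) (es w)).flip (EuclideanSpace.single i 1)) +
      (fderiv ℝ β (es w) (EuclideanSpace.single i 1)) • fderiv ℝ β (es w)).comp
      (es.toContinuousLinearMap)) with hF'
  have hg1' : ∀ (i : Fin (n+1)) x, HasFDerivAt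
      (fun y => fderiv ℝ β y (EuclideanSpace.single i 1))
      ((fderiv ℝ (fderiv ℝ β) x).flip (EuclideanSpace.single i 1)) x := by
    intro i x
    have := (hDd x).hasFDerivAt.clm_apply (hasFDerivAt_const (EuclideanSpace.single i (1:ℝ)) x)
    simpa using this
  have hFder : ∀ (i : Fin (n+1)) w, HasFDerivAt (F i) (F' i w) w := by
    intro i w
    have hmul : HasFDerivAt
        (fun y => β y * fderiv ℝ β y (EuclideanSpace.single i 1))
        (β (es w) • ((fderiv ℝ (fderiv ℝ β) (es w)).flip (EuclideanSpace.single i 1)) +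
          (fderiv ℝ β (es w) (EuclideanSpace.single i 1)) • fderiv ℝ β (es w)) (es w) :=
      (hβd (es w)).hasFDerivAt.mul (hg1' i (es w))
    exact hmul.comp w (es.toContinuousLinearMap.hasFDerivAt)
  have hsingle : ∀ i : Fin (n+1), es (Pi.single i (1:ℝ)) = EuclideanSpace.single i 1 := fun i => rfl
  have hdivval : ∀ w, (∑ i, F' i w (Pi.single i 1)) = G w := by
    intro w
    have : ∀ i : Fin (n+1), F' i w (Pi.single i 1) =
        β (es w) * fderiv ℝ (fderiv ℝ β) (es w) (EuclideanSpace.single i 1)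
          (EuclideanSpace.single i 1) +
        (fderiv ℝ β (es w) (EuclideanSpace.single i 1))^2 := by
      intro i
      rw [hF']
      simp only [ContinuousLinearMap.comp_apply, ContinuousLinearMap.add_apply,
        ContinuousLinearMap.smul_apply, ContinuousLinearMap.flip_apply]
      have : es.toContinuousLinearMap (Pi.single i (1:ℝ)) = EuclideanSpace.single i 1 := rfl
      rw [this]
      simp [smul_eq_mul]
      ring
    rw [Finset.sum_congr rfl fun i _ => this i, Finset.sum_add_distrib, ← Finset.mul_sum,
      hlap0 (es w), mul_zero, zero_add, hG]
  -- periodicity of F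
  have hFper : ∀ (i : Fin (n+1)) (z : Fin (n+1) → ℝ),
      F i (z + T i • (Pi.single i 1 : Fin (n+1) → ℝ)) = F i z := by
    intro i z
    have hadd : es (z + T i • (Pi.single i 1 : Fin (n+1) → ℝ)) = es z + T i • EuclideanSpace.single i 1 := by
      rw [map_add, _root_.map_smul, hsingle]
    rw [hF]
    simp only [hadd, hper _ i, hDper _ i]
  -- the divergence theorem
  have hdiv := MeasureTheory.integral_divergence_of_hasFDerivAt_off_countable'
    (a := (0 : Fin (n+1) → ℝ)) (b := T) (fun i => (hT i).le) F F' ∅ countable_empty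
    (fun i => by
      refine Continuous.continuousOn ?_
      exact ((hβc.comp hesc).mul
        (((ContinuousLinearMap.apply ℝ ℝ (EuclideanSpace.single i 1)).continuous.comp
          (hDc.comp hesc)))))
    (fun x _ i => hFder i x)
    (by
      rw [show (fun x => ∑ i, F' i x (Pi.single i 1)) = G from funext hdivval]
      exact hGc.continuousOn.integrableOn_compact isCompact_Icc)
  -- the boundary terms cancel by periodicity
  have hbound : ∀ i : Fin (n+1), ∀ y : Fin n → ℝ,
      F i (i.insertNth (T i) y) = F i (i.insertNth ((0 : Fin (n+1) → ℝ) i) y) := by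
    intro i y
    have hins : i.insertNth (T i) y = i.insertNth ((0 : Fin (n+1) → ℝ) i) y
        + T i • (Pi.single i 1 : Fin (n+1) → ℝ) := by
      funext j
      rcases eq_or_ne j i with rfl | hj
      · simp [Fin.insertNth_apply_same]
      · obtain ⟨k, rfl⟩ := Fin.exists_succAbove_eq hj
        simp [Fin.insertNth_apply_succAbove, Pi.single_eq_of_ne hj]
    rw [hins, hFper]
  have hrhs : (∑ i : Fin (n+1),
      ((∫ x in Set.Icc ((0 : Fin (n+1) → ℝ) ∘ i.succAbove) (T ∘ i.succAbove),
        F i (i.insertNth (T i) x)) -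
       ∫ x in Set.Icc ((0 : Fin (n+1) → ℝ) ∘ i.succAbove) (T ∘ i.succAbove),
        F i (i.insertNth ((0 : Fin (n+1) → ℝ) i) x))) = 0 := by
    refine Finset.sum_eq_zero fun i _ => ?_
    rw [sub_eq_zero]
    exact integral_congr_ae (Eventually.of_forall fun y => hbound i y)
  have hint0 : (∫ w in Set.Icc (0 : Fin (n+1) → ℝ) T, G w) = 0 := by
    have h1 : (∫ x in Set.Icc (0 : Fin (n+1) → ℝ) T, ∑ i, F' i x (Pi.single i 1))
        = ∫ w in Set.Icc (0 : Fin (n+1) → ℝ) T, G w :=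
      setIntegral_congr_fun measurableSet_Icc fun w _ => hdivval w
    rw [← h1, hdiv, hrhs]
  -- hence the gradient vanishes on the cell
  have hae : G =ᵐ[volume.restrict (Set.Icc (0 : Fin (n+1) → ℝ) T)] 0 :=
    (setIntegral_eq_zero_iff_of_nonneg_ae
      (Eventually.of_forall fun w => hGnonneg w)
      (hGc.continuousOn.integrableOn_compact isCompact_Icc)).mp hint0
  have hclosure : Set.Icc (0 : Fin (n+1) → ℝ) T ⊆
      closure (interior (Set.Icc (0 : Fin (n+1) → ℝ) T)) := by
    rw [← Set.pi_univ_Icc, interior_pi_set Set.finite_univ, closure_pi_set]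
    intro x hx
    rw [Set.mem_pi] at hx ⊢
    intro i _
    have h0 : ((0 : Fin (n+1) → ℝ) i) ≠ T i := (hT i).ne
    rw [interior_Icc, closure_Ioo h0]
    exact hx i trivial
  have hGzero : ∀ w ∈ Set.Icc (0 : Fin (n+1) → ℝ) T, G w = 0 :=
    fun w hw => Measure.eqOn_of_ae_eq hae hGc.continuousOn continuousOn_const hclosure hw
  -- conclusion : the derivative of β vanishes everywhere
  have hfd0 : ∀ x, fderiv ℝ β x = 0 := by
    intro x
    obtain ⟨w, hw, hred⟩ := reduce T hT x
    have h1 : fderiv ℝ β x = fderiv ℝ β (es w) :=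
      (hred _ (fderiv ℝ β) (fun y i => hDper y i)).symm
    have h2 : G w = 0 := hGzero w hw
    have h3 : ∀ i, fderiv ℝ β (es w) (EuclideanSpace.single i 1) = 0 := by
      intro i
      have := (Finset.sum_eq_zero_iff_of_nonneg (fun j _ => sq_nonneg _)).mp h2 i
        (Finset.mem_univ i)
      exact pow_eq_zero_iff (two_ne_zero) |>.mp this
    rw [h1]
    apply ContinuousLinearMap.ext
    intro v
    have hv := eucl_sum v
    rw [hv, map_sum]
    simp only [_root_.map_smul, h3, smul_eq_mul, mul_zero, Finset.sum_const_zero,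
      ContinuousLinearMap.zero_apply]
  exact fun x y => is_const_of_fderiv_eq_zero hβd hfd0 x y
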